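/- Let N ≥ 2 be an integer and M = 4^{N+1}. Consider the zero-size instance over colors {white, red, blue} consisting of phase 0 (M white items) followed by phases i = 1, …, N, where phase i consists of a_i·M/2 red items, then (1 − a_i/2)·M blue items, then M white items, with a_i = 2 − (3/4)^{i−1}. Then OPT = M for this instance, and every run of BaP uses exactly (2 − (3/4)^N)·M bins. Consequently, the asymptotic competitive ratio of BaP restricted to zero-size items is at least 2. -/

import Mathlib

/-- The three colors used in the construction. -/
inductive Color3 : Type
  | white
  | red
  | blue
deriving DecidableEq

/-- The number of red items in phase `i` (for `1 ≤ i ≤ N`) of the adversarial zero-size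
instance: `a_i·M/2 = 4^(N+1) − 2·3^(i−1)·4^(N−i+1)`, where `M = 4^(N+1)` and
`a_i = 2 − (3/4)^(i−1)`. -/
def redCount (N i : ℕ) : ℕ := 4 ^ (N + 1) - 2 * 3 ^ (i - 1) * 4 ^ (N - i + 1)

/-- The color of item `t` (1-based) of the adversarial zero-size instance with parameter `N`:
phase `0` consists of `M = 4^(N+1)` white items, and phase `i` (for `1 ≤ i ≤ N`) consists of
`a_i·M/2` red items, then `(1 − a_i/2)·M` blue items, then `M` white items. -/
def advColor (N : ℕ) (t : ℕ) : Color3 :=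
  if t ≤ 4 ^ (N + 1) then Color3.white
  else
    let i := (t - 4 ^ (N + 1) - 1) / (2 * 4 ^ (N + 1)) + 1
    let r := (t - 4 ^ (N + 1) - 1) % (2 * 4 ^ (N + 1)) + 1
    if r ≤ redCount N i then Color3.red
    else if r ≤ 4 ^ (N + 1) then Color3.blue
    else Color3.white

/-- A packing of the instance with `n` items, sizes `s` and colors `c` (items are indexed
`1,…,n`) into bins `1,…,L`: each bin has total size at most `1`, and two items packed
consecutively into the same bin have different colors. -/
def IsPacking {γ : Type*} (n L : ℕ) (s : ℕ → ℝ) (c : ℕ → γ) (f : ℕ → ℕ) : Prop :=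
  (∀ t, 1 ≤ t → t ≤ n → 1 ≤ f t ∧ f t ≤ L) ∧
  (∀ b, (∑ l ∈ (Finset.Icc 1 n).filter fun l => f l = b, s l) ≤ 1) ∧
  (∀ i j, 1 ≤ i → i < j → j ≤ n → f i = f j →
    (∀ l, i < l → l < j → f l ≠ f i) → c i ≠ c j)

/-- `OPTcost n s c` is the minimum number of bins over all packings of the instance. -/
noncomputable def OPTcost {γ : Type*} (n : ℕ) (s : ℕ → ℝ) (c : ℕ → γ) : ℕ :=
  sInf {L | ∃ f, IsPacking n L s c f}

/-- A run of the algorithm Balanced-Pseudo (BaP) on an instance of `n` items with colors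
`color 1, …, color n`.  `assign t` is the (1-based) index of the pseudo-bin receiving item `t`,
`nbins t` is the number of pseudo-bins after items `1,…,t` have been processed, and
`bcolor t j` is the color of pseudo-bin `j` after items `1,…,t` have been processed
(the color of the last item assigned to it).  When item `t` arrives, either all existing
pseudo-bins have color `color t` and a new pseudo-bin is opened, or item `t` is assigned to an
existing pseudo-bin whose color `g` differs from `color t` and is such that the number of
pseudo-bins of color `g` is maximal among colors different from `color t` (ties arbitrary). -/
structure BaPRun (n : ℕ) {γ : Type*} [DecidableEq γ] (color : ℕ → γ) where
  assign : ℕ → ℕ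
  nbins : ℕ → ℕ
  bcolor : ℕ → ℕ → γ
  nbins_zero : nbins 0 = 0
  step : ∀ t, 1 ≤ t → t ≤ n →
    (assign t = nbins (t - 1) + 1 ∧ nbins t = nbins (t - 1) + 1 ∧
      ∀ j, 1 ≤ j → j ≤ nbins (t - 1) → bcolor (t - 1) j = color t) ∨
    (1 ≤ assign t ∧ assign t ≤ nbins (t - 1) ∧ nbins t = nbins (t - 1) ∧
      bcolor (t - 1) (assign t) ≠ color t ∧
      ∀ g, g ≠ color t →
        ((Finset.Icc 1 (nbins (t - 1))).filter fun j => bcolor (t - 1) j = g).card ≤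
          ((Finset.Icc 1 (nbins (t - 1))).filter fun j =>
            bcolor (t - 1) j = bcolor (t - 1) (assign t)).card)
  bcolor_step : ∀ t, 1 ≤ t → t ≤ n → ∀ j,
    bcolor t j = if j = assign t then color t else bcolor (t - 1) j

/-- `R.Y m` is the index of the first item assigned to pseudo-bin `m`. -/
noncomputable def BaPRun.Y {n : ℕ} {γ : Type*} [DecidableEq γ] {c : ℕ → γ}
    (R : BaPRun n c) (m : ℕ) : ℕ :=
  sInf {t | 1 ≤ t ∧ t ≤ n ∧ R.assign t = m}

/-- The number of pseudo-bins of color `g` just after items `1,…,t` have been processed. -/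
def BaPRun.binsOfColor {n : ℕ} {γ : Type*} [DecidableEq γ] {c : ℕ → γ}
    (R : BaPRun n c) (t : ℕ) (g : γ) : ℕ :=
  ((Finset.Icc 1 (R.nbins t)).filter fun j => R.bcolor t j = g).card

/-- Number of further bins opened by Next Fit on the list `l` of item sizes when the current
bin already has load `load`. -/
noncomputable def nfExtra : List ℝ → ℝ → ℕ
  | [], _ => 0
  | a :: l, load => if load + a ≤ 1 then nfExtra l (load + a) else 1 + nfExtra l a

/-- Number of bins used by Next Fit on the list `l` of item sizes. -/
noncomputable def nfBins : List ℝ → ℕ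
  | [] => 0
  | a :: l => 1 + nfExtra l a

/-- The total number of (actual) bins used by the run `R` of BaP: the items of each pseudo-bin
are split into bins, in order, by Next Fit. -/
noncomputable def bapCost {n : ℕ} {γ : Type*} [DecidableEq γ] {c : ℕ → γ}
    (s : ℕ → ℝ) (R : BaPRun n c) : ℕ :=
  ∑ j ∈ Finset.Icc 1 (R.nbins n),
    nfBins ((((Finset.Icc 1 n).filter fun t => R.assign t = j).sort (· ≤ ·)).map s)

section Aux
open Finset

lemma cnt_sum_aux (s : Finset ℕ) (f : ℕ → Color3) :
    (s.filter fun j => f j = Color3.white).card + (s.filter fun j => f j = Color3.red).card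
      + (s.filter fun j => f j = Color3.blue).card = s.card := by
  classical
  induction s using Finset.induction with
  | empty => simp
  | @insert a s' h ih =>
    rw [Finset.filter_insert, Finset.filter_insert, Finset.filter_insert]
    have h1 : a ∉ s'.filter fun j => f j = Color3.white := fun hc => h (Finset.mem_of_mem_filter _ hc)
    have h2 : a ∉ s'.filter fun j => f j = Color3.red := fun hc => h (Finset.mem_of_mem_filter _ hc)
    have h3 : a ∉ s'.filter fun j => f j = Color3.blue := fun hc => h (Finset.mem_of_mem_filter _ hc)
    cases hf : f a <;>
      simp [hf, Finset.card_insert_of_notMem, h, h1, h2, h3] <;> omega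

lemma cnt_sum {n : ℕ} {c : ℕ → Color3} (R : BaPRun n c) (t : ℕ) :
    R.binsOfColor t .white + R.binsOfColor t .red + R.binsOfColor t .blue = R.nbins t := by
  have := cnt_sum_aux (Finset.Icc 1 (R.nbins t)) (R.bcolor t)
  simpa [BaPRun.binsOfColor] using this

lemma step_cases {γ : Type*} [DecidableEq γ] {n : ℕ} {c : ℕ → γ} (R : BaPRun n c) {t : ℕ}
    (ht1 : 1 ≤ t) (ht2 : t ≤ n) :
    (R.nbins t = R.nbins (t-1) + 1 ∧
      (∀ g, g ≠ c t → R.binsOfColor (t-1) g = 0) ∧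
      R.binsOfColor t (c t) = R.nbins t ∧
      (∀ g, g ≠ c t → R.binsOfColor t g = 0)) ∨
    (∃ g0, g0 ≠ c t ∧ R.nbins t = R.nbins (t-1) ∧
      1 ≤ R.binsOfColor (t-1) g0 ∧
      (∀ g, g ≠ c t → R.binsOfColor (t-1) g ≤ R.binsOfColor (t-1) g0) ∧
      R.binsOfColor t (c t) = R.binsOfColor (t-1) (c t) + 1 ∧
      R.binsOfColor t g0 = R.binsOfColor (t-1) g0 - 1 ∧
      (∀ g, g ≠ c t → g ≠ g0 → R.binsOfColor t g = R.binsOfColor (t-1) g)) := by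
  classical
  have hbc := R.bcolor_step t ht1 ht2
  rcases R.step t ht1 ht2 with ⟨ha, hn, hall⟩ | ⟨ha1, ha2, hn, hne, hmax⟩
  · left
    have hallt : ∀ j, j ∈ Finset.Icc 1 (R.nbins t) → R.bcolor t j = c t := by
      intro j hj
      rw [Finset.mem_Icc] at hj
      rw [hbc j]
      by_cases hja : j = R.assign t
      · simp [hja]
      · rw [if_neg hja]
        exact hall j hj.1 (by omega)
    refine ⟨hn, ?_, ?_, ?_⟩
    · intro g hg
      unfold BaPRun.binsOfColor
      rw [Finset.card_eq_zero, Finset.filter_eq_empty_iff]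
      intro j hj
      rw [Finset.mem_Icc] at hj
      rw [hall j hj.1 hj.2]
      exact fun h => hg h.symm
    · unfold BaPRun.binsOfColor
      rw [Finset.filter_true_of_mem hallt, Nat.card_Icc]
      omega
    · intro g hg
      unfold BaPRun.binsOfColor
      rw [Finset.card_eq_zero, Finset.filter_eq_empty_iff]
      intro j hj
      rw [hallt j hj]
      exact fun h => hg h.symm
  · right
    refine ⟨R.bcolor (t-1) (R.assign t), hne, hn, ?_, hmax, ?_, ?_, ?_⟩
    · have hmem : R.assign t ∈ (Finset.Icc 1 (R.nbins (t-1))).filter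
          (fun j => R.bcolor (t-1) j = R.bcolor (t-1) (R.assign t)) := by
        simp [Finset.mem_Icc, ha1, ha2]
      exact Finset.card_pos.2 ⟨_, hmem⟩
    · unfold BaPRun.binsOfColor
      rw [hn]
      have : (Finset.Icc 1 (R.nbins (t-1))).filter (fun j => R.bcolor t j = c t)
          = insert (R.assign t) ((Finset.Icc 1 (R.nbins (t-1))).filter
              (fun j => R.bcolor (t-1) j = c t)) := by
        ext j
        by_cases hja : j = R.assign t
        · subst hja
          simp [Finset.mem_Icc, ha1, ha2, hbc (R.assign t)]
        · simp [Finset.mem_filter, Finset.mem_insert, hja, hbc j]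
      rw [this, Finset.card_insert_of_notMem]
      simp only [Finset.mem_filter, not_and]
      intro _
      exact hne
    · unfold BaPRun.binsOfColor
      rw [hn]
      have : (Finset.Icc 1 (R.nbins (t-1))).filter
            (fun j => R.bcolor t j = R.bcolor (t-1) (R.assign t))
          = ((Finset.Icc 1 (R.nbins (t-1))).filter
              (fun j => R.bcolor (t-1) j = R.bcolor (t-1) (R.assign t))).erase (R.assign t) := by
        ext j
        by_cases hja : j = R.assign t
        · subst hja
          simp only [Finset.mem_filter, Finset.mem_erase, hbc (R.assign t), if_pos rfl]
          simp only [Finset.mem_Icc]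
          exact ⟨fun h => absurd h.2.symm hne, fun h => absurd h.1 (by simp)⟩
        · simp [Finset.mem_filter, Finset.mem_erase, hja, hbc j]
      rw [this, Finset.card_erase_of_mem]
      simp [Finset.mem_filter, Finset.mem_Icc, ha1, ha2]
    · intro g hg hg0
      unfold BaPRun.binsOfColor
      rw [hn]
      congr 1
      apply Finset.filter_congr
      intro j hj
      rw [hbc j]
      by_cases hja : j = R.assign t
      · subst hja
        simp only [if_pos rfl]
        constructor
        · exact fun h => absurd h.symm hg
        · exact fun h => absurd h.symm hg0
      · rw [if_neg hja]

end Aux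
section Segments

variable {n : ℕ} {c : ℕ → Color3} (R : BaPRun n c)

lemma red_segment (t0 w0 r0 n0 : ℕ)
    (hw : R.binsOfColor t0 .white = w0) (hr : R.binsOfColor t0 .red = r0)
    (hb : R.binsOfColor t0 .blue = 0) (hnb : R.nbins t0 = n0) :
    ∀ k, t0 + k ≤ n → k ≤ w0 → (∀ p, 1 ≤ p → p ≤ k → c (t0 + p) = Color3.red) →
    R.binsOfColor (t0+k) .white = w0 - k ∧ R.binsOfColor (t0+k) .red = r0 + k ∧
    R.binsOfColor (t0+k) .blue = 0 ∧ R.nbins (t0+k) = n0 := by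
  intro k
  induction k with
  | zero => intro _ _ _; simpa using ⟨hw, hr, hb, hnb⟩
  | succ k ih =>
    intro hkn hkw hcol
    obtain ⟨ihw, ihr, ihb, ihn⟩ := ih (by omega) (by omega)
      (fun p h1 h2 => hcol p h1 (by omega))
    have hpred : t0 + (k+1) - 1 = t0 + k := by omega
    have hct : c (t0 + (k+1)) = Color3.red := hcol (k+1) (by omega) le_rfl
    rcases step_cases R (t := t0 + (k+1)) (by omega) hkn with
      ⟨hn1, hzero, hcc, hoz⟩ | ⟨g0, hg0, hn1, hge1, hmax, hcc, hg0c, hother⟩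
    · rw [hpred] at hzero
      have := hzero .white (by rw [hct]; simp)
      omega
    · rw [hpred] at hn1 hge1 hmax hcc hg0c hother
      rw [hct] at hg0 hcc hother
      cases g0 with
      | white =>
        refine ⟨?_, ?_, ?_, by omega⟩
        · rw [hg0c, ihw]; omega
        · rw [hcc, ihr]; omega
        · rw [hother .blue (by simp) (by simp), ihb]
      | red => exact absurd rfl hg0
      | blue => rw [ihb] at hge1; omega

lemma blue_segment (t0 K0 n0 : ℕ)
    (hw : R.binsOfColor t0 .white = K0) (hr : R.binsOfColor t0 .red = K0)
    (hb : R.binsOfColor t0 .blue = 0) (hnb : R.nbins t0 = n0) :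
    ∀ k, t0 + k ≤ n → k ≤ 2*K0 → (∀ p, 1 ≤ p → p ≤ k → c (t0 + p) = Color3.blue) →
    ∃ w r, R.binsOfColor (t0+k) .white = w ∧ R.binsOfColor (t0+k) .red = r ∧
      w + r + k = 2*K0 ∧ w ≤ r + 1 ∧ r ≤ w + 1 ∧
      R.binsOfColor (t0+k) .blue = k ∧ R.nbins (t0+k) = n0 := by
  intro k
  induction k with
  | zero => exact fun _ _ _ => ⟨K0, K0, by simpa using ⟨hw, hr, by omega, hb, hnb⟩⟩
  | succ k ih =>
    intro hkn hkw hcol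
    obtain ⟨w, r, ihw, ihr, ihs, ihd1, ihd2, ihb, ihn⟩ := ih (by omega) (by omega)
      (fun p h1 h2 => hcol p h1 (by omega))
    have hpred : t0 + (k+1) - 1 = t0 + k := by omega
    have hct : c (t0 + (k+1)) = Color3.blue := hcol (k+1) (by omega) le_rfl
    rcases step_cases R (t := t0 + (k+1)) (by omega) hkn with
      ⟨hn1, hzero, hcc, hoz⟩ | ⟨g0, hg0, hn1, hge1, hmax, hcc, hg0c, hother⟩
    · rw [hpred] at hzero
      have h1 := hzero .white (by rw [hct]; simp)
      have h2 := hzero .red (by rw [hct]; simp)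
      rw [ihw] at h1; rw [ihr] at h2; omega
    · rw [hpred] at hn1 hge1 hmax hcc hg0c hother
      rw [hct] at hg0 hcc hother hmax
      cases g0 with
      | white =>
        have hle : r ≤ w := by
          have := hmax .red (by simp)
          rw [ihr, ihw] at this; exact this
        rw [ihw] at hge1 hg0c
        refine ⟨w - 1, r, hg0c, ?_, by omega, by omega, by omega, ?_, by omega⟩
        · rw [hother .red (by simp) (by simp), ihr]
        · rw [hcc, ihb]
      | red =>
        have hle : w ≤ r := by
          have := hmax .white (by simp)
          rw [ihr, ihw] at this; exact this
        rw [ihr] at hge1 hg0c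
        refine ⟨w, r - 1, ?_, hg0c, by omega, by omega, by omega, ?_, by omega⟩
        · rw [hother .white (by simp) (by simp), ihw]
        · rw [hcc, ihb]
      | blue => exact absurd rfl hg0

lemma white_convert (t0 w0 m n0 : ℕ)
    (hw : R.binsOfColor t0 .white = w0)
    (hm : R.binsOfColor t0 .red + R.binsOfColor t0 .blue = m) (hnb : R.nbins t0 = n0) :
    ∀ k, t0 + k ≤ n → k ≤ m → (∀ p, 1 ≤ p → p ≤ k → c (t0 + p) = Color3.white) →
    R.binsOfColor (t0+k) .white = w0 + k ∧
    R.binsOfColor (t0+k) .red + R.binsOfColor (t0+k) .blue + k = m ∧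
    R.nbins (t0+k) = n0 := by
  intro k
  induction k with
  | zero => intro _ _ _; simpa using ⟨hw, hm, hnb⟩
  | succ k ih =>
    intro hkn hkw hcol
    obtain ⟨ihw, ihm, ihn⟩ := ih (by omega) (by omega) (fun p h1 h2 => hcol p h1 (by omega))
    have hpred : t0 + (k+1) - 1 = t0 + k := by omega
    have hct : c (t0 + (k+1)) = Color3.white := hcol (k+1) (by omega) le_rfl
    rcases step_cases R (t := t0 + (k+1)) (by omega) hkn with
      ⟨hn1, hzero, hcc, hoz⟩ | ⟨g0, hg0, hn1, hge1, hmax, hcc, hg0c, hother⟩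
    · rw [hpred] at hzero
      have h1 := hzero .red (by rw [hct]; simp)
      have h2 := hzero .blue (by rw [hct]; simp)
      omega
    · rw [hpred] at hn1 hge1 hmax hcc hg0c hother
      rw [hct] at hg0 hcc hother
      cases g0 with
      | white => exact absurd rfl hg0
      | red =>
        refine ⟨?_, ?_, by omega⟩
        · rw [hcc, ihw]; omega
        · rw [hg0c, hother .blue (by simp) (by simp)]
          omega
      | blue =>
        refine ⟨?_, ?_, by omega⟩
        · rw [hcc, ihw]; omega
        · rw [hg0c, hother .red (by simp) (by simp)]
          omega

lemma white_open (t0 n0 : ℕ)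
    (hr : R.binsOfColor t0 .red = 0) (hb : R.binsOfColor t0 .blue = 0)
    (hw : R.binsOfColor t0 .white = n0) (hnb : R.nbins t0 = n0) :
    ∀ k, t0 + k ≤ n → (∀ p, 1 ≤ p → p ≤ k → c (t0 + p) = Color3.white) →
    R.binsOfColor (t0+k) .white = n0 + k ∧ R.binsOfColor (t0+k) .red = 0 ∧
    R.binsOfColor (t0+k) .blue = 0 ∧ R.nbins (t0+k) = n0 + k := by
  intro k
  induction k with
  | zero => intro _ _; simpa using ⟨hw, hr, hb, hnb⟩
  | succ k ih =>
    intro hkn hcol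
    obtain ⟨ihw, ihr, ihb, ihn⟩ := ih (by omega) (fun p h1 h2 => hcol p h1 (by omega))
    have hpred : t0 + (k+1) - 1 = t0 + k := by omega
    have hct : c (t0 + (k+1)) = Color3.white := hcol (k+1) (by omega) le_rfl
    rcases step_cases R (t := t0 + (k+1)) (by omega) hkn with
      ⟨hn1, hzero, hcc, hoz⟩ | ⟨g0, hg0, hn1, hge1, hmax, hcc, hg0c, hother⟩
    · rw [hpred] at hn1
      rw [hct] at hcc hoz
      refine ⟨?_, ?_, ?_, by omega⟩
      · rw [hcc]; omega
      · exact hoz .red (by simp)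
      · exact hoz .blue (by simp)
    · rw [hpred] at hge1
      rw [hct] at hg0
      cases g0 with
      | white => exact absurd rfl hg0
      | red => rw [ihr] at hge1; omega
      | blue => rw [ihb] at hge1; omega

end Segments
section Adv

lemma advColor_white_of_le (N : ℕ) {t : ℕ} (h : t ≤ 4^(N+1)) : advColor N t = Color3.white := by
  unfold advColor; rw [if_pos h]

lemma advColor_eq (N q p : ℕ) (hp1 : 1 ≤ p) (hp2 : p ≤ 2 * 4^(N+1)) :
    advColor N (4^(N+1) + 2 * 4^(N+1) * q + p) =
      if p ≤ redCount N (q+1) then Color3.red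
      else if p ≤ 4^(N+1) then Color3.blue else Color3.white := by
  have hM : 0 < (4:ℕ)^(N+1) := by positivity
  have h1 : 4^(N+1) + 2 * 4^(N+1) * q + p - 4^(N+1) - 1 = 2 * 4^(N+1) * q + (p-1) := by
    omega
  have hdiv : (2 * 4^(N+1) * q + (p-1)) / (2 * 4^(N+1)) = q := by
    rw [Nat.mul_add_div (by omega), Nat.div_eq_of_lt (by omega)]; omega
  have hmod : (2 * 4^(N+1) * q + (p-1)) % (2 * 4^(N+1)) = p - 1 := by
    rw [Nat.mul_add_mod, Nat.mod_eq_of_lt (by omega)]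
  have hp' : p - 1 + 1 = p := by omega
  simp only [advColor]
  rw [if_neg (by omega), h1, hdiv, hmod, hp']

lemma redCount_eq (N q : ℕ) (hq : q < N) :
    redCount N (q+1) = 4^(N+1) - 2 * (3^q * 4^(N-q)) := by
  unfold redCount
  have h1 : N - (q+1) + 1 = N - q := by omega
  have h2 : (q+1) - 1 = q := by omega
  rw [h1, h2, mul_assoc]

end Adv

section PhaseStep

lemma phase_step {n : ℕ} {c : ℕ → Color3} (R : BaPRun n c) (t0 A u : ℕ)
    (hu : 16*u ≤ A)
    (h1 : ∀ p, 1 ≤ p → p ≤ A - 8*u → c (t0 + p) = Color3.red)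
    (h2 : ∀ p, A - 8*u < p → p ≤ A → c (t0 + p) = Color3.blue)
    (h3 : ∀ p, A < p → p ≤ 2*A → c (t0 + p) = Color3.white)
    (hn : t0 + 2*A ≤ n)
    (hw : R.binsOfColor t0 .white = 2*A - 16*u) (hr : R.binsOfColor t0 .red = 0)
    (hb : R.binsOfColor t0 .blue = 0) (hnb : R.nbins t0 = 2*A - 16*u) :
    R.binsOfColor (t0 + 2*A) .white = 2*A - 12*u ∧
    R.binsOfColor (t0 + 2*A) .red = 0 ∧
    R.binsOfColor (t0 + 2*A) .blue = 0 ∧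
    R.nbins (t0 + 2*A) = 2*A - 12*u := by
  -- red segment
  obtain ⟨s1w, s1r, s1b, s1n⟩ := red_segment R t0 (2*A - 16*u) 0 (2*A - 16*u)
    hw hr hb hnb (A - 8*u) (by omega) (by omega)
    (fun p hp1 hp2 => h1 p hp1 hp2)
  -- blue segment
  obtain ⟨w, r, s2w, s2r, s2s, s2d1, s2d2, s2b, s2n⟩ := blue_segment R (t0 + (A - 8*u))
    (A - 8*u) (2*A - 16*u)
    (by rw [s1w]; omega) (by rw [s1r]; omega) s1b s1n
    (8*u) (by omega) (by omega)
    (fun p hp1 hp2 => by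
      have ht : t0 + (A - 8*u) + p = t0 + (A - 8*u + p) := by omega
      rw [ht]; exact h2 _ (by omega) (by omega))
  have hwr : w = A - 12*u ∧ r = A - 12*u := by omega
  -- white convert segment
  obtain ⟨s3w, s3m, s3n⟩ := white_convert R (t0 + (A - 8*u) + 8*u) (A - 12*u) (A - 4*u)
    (2*A - 16*u)
    (by rw [s2w]; omega) (by rw [s2r, s2b]; omega) s2n
    (A - 4*u) (by omega) (by omega)
    (fun p hp1 hp2 => by
      have ht : t0 + (A - 8*u) + 8*u + p = t0 + (A + p) := by omega
      rw [ht]; exact h3 _ (by omega) (by omega))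
  -- white open segment
  obtain ⟨s4w, s4r, s4b, s4n⟩ := white_open R (t0 + (A - 8*u) + 8*u + (A - 4*u))
    (2*A - 16*u)
    (by omega) (by omega) (by rw [s3w]; omega) s3n
    (4*u) (by omega)
    (fun p hp1 hp2 => by
      have ht : t0 + (A - 8*u) + 8*u + (A - 4*u) + p = t0 + (2*A - 4*u + p) := by omega
      rw [ht]; exact h3 _ (by omega) (by omega))
  have htf : t0 + (A - 8*u) + 8*u + (A - 4*u) + 4*u = t0 + 2*A := by omega
  rw [htf] at s4w s4r s4b s4n
  exact ⟨by rw [s4w]; omega, s4r, s4b, by rw [s4n]; omega⟩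

end PhaseStep
section Invariant

lemma cnt_zero {n : ℕ} {c : ℕ → Color3} (R : BaPRun n c) (g : Color3) :
    R.binsOfColor 0 g = 0 := by
  simp [BaPRun.binsOfColor, R.nbins_zero]

lemma phase_invariant {N : ℕ} (R : BaPRun (4^(N+1) + 2*4^(N+1)*N) (advColor N)) :
    ∀ q, q ≤ N →
      R.binsOfColor (4^(N+1) + 2*4^(N+1)*q) .white = 2*4^(N+1) - 4*(3^q*4^(N-q)) ∧
      R.binsOfColor (4^(N+1) + 2*4^(N+1)*q) .red = 0 ∧
      R.binsOfColor (4^(N+1) + 2*4^(N+1)*q) .blue = 0 ∧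
      R.nbins (4^(N+1) + 2*4^(N+1)*q) = 2*4^(N+1) - 4*(3^q*4^(N-q)) := by
  intro q
  induction q with
  | zero =>
    intro _
    have hM4 : (4:ℕ)^(N+1) = 4*4^N := by ring
    obtain ⟨h1, h2, h3, h4⟩ := white_open R 0 0 (cnt_zero R _) (cnt_zero R _) (cnt_zero R _)
      R.nbins_zero (4^(N+1)) (by omega)
      (fun p hp1 hp2 => by rw [Nat.zero_add]; exact advColor_white_of_le N hp2)
    rw [Nat.zero_add] at h1 h2 h3 h4
    have ht : 4^(N+1) + 2*4^(N+1)*0 = 4^(N+1) := by ring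
    rw [ht]
    have he : (3:ℕ)^0*4^(N-0) = 4^N := by norm_num
    rw [he]
    exact ⟨by rw [h1]; omega, h2, h3, by rw [h4]; omega⟩
  | succ q ihq =>
    intro hq1
    obtain ⟨ihw, ihr, ihb, ihn⟩ := ihq (by omega)
    have hq : q < N := by omega
    have hA : (4:ℕ)^(N+1) = 16 * 4^(N-1) := by
      have h : N + 1 = (N-1) + 2 := by omega
      rw [h, pow_add]; ring
    have hu4 : 3^q * 4^(N-q-1) ≤ 4^(N-1) := by
      calc 3^q * 4^(N-q-1) ≤ 4^q * 4^(N-q-1) :=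
            Nat.mul_le_mul_right _ (Nat.pow_le_pow_left (by norm_num) q)
      _ = 4^(N-1) := by rw [← pow_add]; congr 1; omega
    have he : 3^q * 4^(N-q) = 4 * (3^q * 4^(N-q-1)) := by
      have h1 : N - q = (N-q-1) + 1 := by omega
      conv_lhs => rw [h1, pow_succ]
      ring
    have he' : 3^(q+1) * 4^(N-(q+1)) = 3 * (3^q * 4^(N-q-1)) := by
      have h1 : N - (q+1) = N - q - 1 := by omega
      rw [h1, pow_succ]; ring
    have hred : redCount N (q+1) = 4^(N+1) - 8 * (3^q * 4^(N-q-1)) := by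
      rw [redCount_eq N q hq, he]; omega
    have hmul : 2*4^(N+1)*(q+1) ≤ 2*4^(N+1)*N := by gcongr
    have hT2 : 2*4^(N+1)*(q+1) = 2*4^(N+1)*q + 2*4^(N+1) := by ring
    obtain ⟨f1, f2, f3, f4⟩ := phase_step R (4^(N+1) + 2*4^(N+1)*q) (4^(N+1)) (3^q*4^(N-q-1))
      (by omega)
      (fun p hp1 hp2 => by
        rw [advColor_eq N q p hp1 (by omega), if_pos (by omega)])
      (fun p hp1 hp2 => by
        rw [advColor_eq N q p (by omega) (by omega), if_neg (by omega), if_pos hp2])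
      (fun p hp1 hp2 => by
        rw [advColor_eq N q p (by omega) hp2, if_neg (by omega), if_neg (by omega)])
      (by omega)
      (by rw [ihw]; omega) ihr ihb (by rw [ihn]; omega)
    have htq : 4^(N+1) + 2*4^(N+1)*(q+1) = 4^(N+1) + 2*4^(N+1)*q + 2*4^(N+1) := by omega
    rw [htq]
    refine ⟨?_, f2, f3, ?_⟩
    · rw [f1, he']; omega
    · rw [f4, he']; omega

lemma nbins_final {N : ℕ} (R : BaPRun (4^(N+1) + 2*4^(N+1)*N) (advColor N)) :
    R.nbins (4^(N+1) + 2*4^(N+1)*N) = 2*4^(N+1) - 4*3^N := by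
  have h := (phase_invariant R N le_rfl).2.2.2
  have h2 : (3:ℕ)^N * 4^(N-N) = 3^N := by simp
  rw [h2] at h
  exact h

end Invariant
section Cost

lemma nfExtra_zeros : ∀ (l : List ℕ) (load : ℝ), load ≤ 1 →
    nfExtra (l.map fun _ => (0:ℝ)) load = 0 := by
  intro l
  induction l with
  | nil => intro load _; simp [nfExtra]
  | cons a l ih =>
    intro load hl
    simp only [List.map_cons, nfExtra]
    rw [if_pos (by linarith)]
    exact ih _ (by linarith)

lemma nfBins_zeros (l : List ℕ) (h : l ≠ []) : nfBins (l.map fun _ => (0:ℝ)) = 1 := by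
  cases l with
  | nil => exact absurd rfl h
  | cons a l =>
    simp only [List.map_cons, nfBins]
    rw [nfExtra_zeros l 0 (by norm_num)]

lemma exists_assign {n : ℕ} {γ : Type*} [DecidableEq γ] {c : ℕ → γ} (R : BaPRun n c) (j : ℕ)
    (hj1 : 1 ≤ j) (hj2 : j ≤ R.nbins n) : ∃ t, 1 ≤ t ∧ t ≤ n ∧ R.assign t = j := by
  classical
  have hex : ∃ t, t ≤ n ∧ j ≤ R.nbins t := ⟨n, le_rfl, hj2⟩
  set t := Nat.find hex with htdef
  obtain ⟨htn, htj⟩ := Nat.find_spec hex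
  have ht1 : 1 ≤ t := by
    by_contra h
    have ht0 : t = 0 := by omega
    rw [← htdef, ht0, R.nbins_zero] at htj
    omega
  have hprev : R.nbins (t - 1) < j := by
    have := Nat.find_min hex (m := t - 1) (by omega)
    push_neg at this
    exact this (by omega)
  rcases R.step t ht1 htn with ⟨ha, hn, _⟩ | ⟨_, _, hn, _, _⟩
  · refine ⟨t, ht1, htn, ?_⟩
    rw [← htdef] at htj
    omega
  · rw [← htdef, hn] at htj
    omega

lemma bapCost_eq_nbins {n : ℕ} {γ : Type*} [DecidableEq γ] {c : ℕ → γ} (R : BaPRun n c) :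
    bapCost (fun _ => (0:ℝ)) R = R.nbins n := by
  have key : ∀ j ∈ Finset.Icc 1 (R.nbins n),
      nfBins (((((Finset.Icc 1 n).filter fun t => R.assign t = j).sort (· ≤ ·)).map
        (fun _ => (0:ℝ)))) = 1 := by
    intro j hj
    rw [Finset.mem_Icc] at hj
    obtain ⟨t, ht1, ht2, ht3⟩ := exists_assign R j hj.1 hj.2
    apply nfBins_zeros
    intro hnil
    have hmem : t ∈ ((Finset.Icc 1 n).filter fun t => R.assign t = j) := by
      simp [Finset.mem_Icc, ht1, ht2, ht3]
    have := (Finset.mem_sort (α := ℕ) (· ≤ ·)).2 hmem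
    rw [hnil] at this
    simp at this
  unfold bapCost
  rw [Finset.sum_congr rfl key]
  simp

end Cost
section Opt

lemma redCount_le (N i : ℕ) : redCount N i ≤ 4^(N+1) := Nat.sub_le _ _

lemma advColor_white_iff (N t : ℕ) (ht : 1 ≤ t) :
    advColor N t = Color3.white ↔ ((t-1) / 4^(N+1)) % 2 = 0 := by
  have hM : 0 < (4:ℕ)^(N+1) := by positivity
  by_cases h : t ≤ 4^(N+1)
  · rw [advColor_white_of_le N h]
    have h0 : (t-1)/4^(N+1) = 0 := Nat.div_eq_of_lt (by omega)
    simp [h0]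
  · set s := t - 4^(N+1) - 1 with hsdef
    set q := s / (2*4^(N+1)) with hqdef
    set r := s % (2*4^(N+1)) with hrdef
    have hdm : 2*4^(N+1)*q + r = s := Nat.div_add_mod s (2*4^(N+1))
    have hrlt : r < 2*4^(N+1) := Nat.mod_lt _ (by omega)
    have hteq : t = 4^(N+1) + 2*4^(N+1)*q + (r+1) := by omega
    have hcolor := advColor_eq N q (r+1) (by omega) (by omega)
    rw [← hteq] at hcolor
    have hmm : 4^(N+1)*(1+2*q) = 4^(N+1) + 2*4^(N+1)*q := by ring
    have ht1 : t - 1 = 4^(N+1)*(1+2*q) + r := by omega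
    have hdiv : (t-1)/4^(N+1) = 1 + 2*q + r / 4^(N+1) := by
      rw [ht1, Nat.mul_add_div hM]
    by_cases hr : r + 1 ≤ 4^(N+1)
    · have hr0 : r / 4^(N+1) = 0 := Nat.div_eq_of_lt (by omega)
      rw [hcolor]
      constructor
      · intro hcw
        exfalso
        by_cases hrc : r + 1 ≤ redCount N (q+1)
        · rw [if_pos hrc] at hcw; exact Color3.noConfusion hcw
        · rw [if_neg hrc, if_pos hr] at hcw; exact Color3.noConfusion hcw
      · intro hpar
        rw [hdiv, hr0] at hpar
        omega
    · have hr1 : r / 4^(N+1) = 1 := by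
        have h : r = (r - 4^(N+1)) + 4^(N+1) := by omega
        rw [h, Nat.add_div_right _ hM, Nat.div_eq_of_lt (by omega)]
      rw [hcolor, if_neg (by have := redCount_le N (q+1); omega), if_neg (by omega)]
      simp only [true_iff]
      rw [hdiv, hr1]
      omega

lemma advColor_alt (N t : ℕ) (ht : 1 ≤ t) :
    advColor N t ≠ advColor N (t + 4^(N+1)) := by
  have hM : 0 < (4:ℕ)^(N+1) := by positivity
  have h1 := advColor_white_iff N t ht
  have h2 := advColor_white_iff N (t + 4^(N+1)) (by omega)
  have hd : (t + 4^(N+1) - 1)/4^(N+1) = (t-1)/4^(N+1) + 1 := by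
    have h : t + 4^(N+1) - 1 = (t-1) + 4^(N+1) := by omega
    rw [h, Nat.add_div_right _ hM]
  intro heq
  rw [heq] at h1
  rw [h1, hd] at h2
  omega

lemma packing_exists (N : ℕ) :
    IsPacking (4^(N+1) + 2*4^(N+1)*N) (4^(N+1)) (fun _ => (0:ℝ)) (advColor N)
      (fun t => (t-1) % 4^(N+1) + 1) := by
  have hM : 0 < (4:ℕ)^(N+1) := by positivity
  refine ⟨?_, ?_, ?_⟩
  · intro t _ _
    show 1 ≤ (t-1) % 4^(N+1) + 1 ∧ (t-1) % 4^(N+1) + 1 ≤ 4^(N+1)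
    have := Nat.mod_lt (t-1) hM
    omega
  · intro b
    simp
  · intro i j hi hij hjn hf hgap
    have hf' : (i-1) % 4^(N+1) + 1 = (j-1) % 4^(N+1) + 1 := hf
    have hmod : (i-1) % 4^(N+1) = (j-1) % 4^(N+1) := by omega
    have hdvd : 4^(N+1) ∣ (j-1) - (i-1) :=
      (Nat.modEq_iff_dvd' (by omega)).1 hmod
    have hdvd' : 4^(N+1) ∣ j - i := by
      have h : (j-1) - (i-1) = j - i := by omega
      rwa [h] at hdvd
    have hge : 4^(N+1) ≤ j - i := Nat.le_of_dvd (by omega) hdvd'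
    have hji : j = i + 4^(N+1) := by
      by_contra hne
      have hlt : i + 4^(N+1) < j := by omega
      have : (fun t => (t-1) % 4^(N+1) + 1) (i + 4^(N+1)) ≠
          (fun t => (t-1) % 4^(N+1) + 1) i := hgap (i + 4^(N+1)) (by omega) hlt
      apply this
      show (i + 4^(N+1) - 1) % 4^(N+1) + 1 = (i - 1) % 4^(N+1) + 1
      have h : i + 4^(N+1) - 1 = (i-1) + 4^(N+1) := by omega
      rw [h, Nat.add_mod_right]
    rw [hji]
    exact advColor_alt N i hi

lemma packing_lower {N L : ℕ} {f : ℕ → ℕ}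
    (h : IsPacking (4^(N+1) + 2*4^(N+1)*N) L (fun _ => (0:ℝ)) (advColor N) f) :
    4^(N+1) ≤ L := by
  classical
  obtain ⟨hbound, _, hcons⟩ := h
  have hMn : (4:ℕ)^(N+1) ≤ 4^(N+1) + 2*4^(N+1)*N := by omega
  have hinj : Set.InjOn f (Finset.Icc 1 (4^(N+1))) := by
    intro a ha b hb hab
    rw [Finset.coe_Icc, Set.mem_Icc] at ha hb
    by_contra hne
    -- wlog a < b
    rcases Nat.lt_or_ge a b with hlt | hge
    · have hex : ∃ l, a < l ∧ l ≤ b ∧ f l = f a := ⟨b, hlt, le_rfl, hab.symm⟩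
      set j' := Nat.find hex with hj'def
      obtain ⟨hj1, hj2, hj3⟩ := Nat.find_spec hex
      have := hcons a j' ha.1 hj1 (by omega) hj3.symm
        (fun l hl1 hl2 hfl => by
          have := Nat.find_min hex (m := l) (by omega)
          push_neg at this
          exact absurd hfl (this hl1 (by omega)))
      exact this (by
        rw [advColor_white_of_le N (by omega), advColor_white_of_le N (by omega)])
    · have hlt : b < a := by omega
      have hex : ∃ l, b < l ∧ l ≤ a ∧ f l = f b := ⟨a, hlt, le_rfl, hab⟩
      set j' := Nat.find hex with hj'def
      obtain ⟨hj1, hj2, hj3⟩ := Nat.find_spec hex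
      have := hcons b j' hb.1 hj1 (by omega) hj3.symm
        (fun l hl1 hl2 hfl => by
          have := Nat.find_min hex (m := l) (by omega)
          push_neg at this
          exact absurd hfl (this hl1 (by omega)))
      exact this (by
        rw [advColor_white_of_le N (by omega), advColor_white_of_le N (by omega)])
  have hmaps : ∀ a ∈ Finset.Icc 1 (4^(N+1)), f a ∈ Finset.Icc 1 L := by
    intro a ha
    rw [Finset.mem_Icc] at ha
    rw [Finset.mem_Icc]
    exact hbound a ha.1 (by omega)
  have := Finset.card_le_card_of_injOn f hmaps hinj
  simpa using this

lemma opt_eq (N : ℕ) :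
    OPTcost (4^(N+1) + 2*4^(N+1)*N) (fun _ => (0:ℝ)) (advColor N) = 4^(N+1) := by
  unfold OPTcost
  apply le_antisymm
  · exact Nat.sInf_le ⟨_, packing_exists N⟩
  · exact le_csInf ⟨_, _, packing_exists N⟩ (fun L ⟨f, hf⟩ => packing_lower hf)

end Opt
/-- for every `N ≥ 2`, on the adversarial zero-size instance of
`M + 2·M·N` items (`M = 4^(N+1)`) described by `advColor N`, the optimal offline cost is
exactly `M`, while every run of BaP uses exactly `(2 − (3/4)^N)·M = 2·4^(N+1) − 4·3^N` bins.
Consequently, the asymptotic competitive ratio of BaP restricted to zero-size items is at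
least `2`: for every `ρ < 2` and every `K`, there is a zero-size instance with `OPT ≥ K` on
which every run of BaP uses at least `ρ·OPT` bins. -/
theorem bap_zero_size_lower_bound_two :
    (∀ N : ℕ, 2 ≤ N →
      OPTcost (4 ^ (N + 1) + 2 * 4 ^ (N + 1) * N) (fun _ => (0 : ℝ)) (advColor N) =
        4 ^ (N + 1) ∧
      ∀ R : BaPRun (4 ^ (N + 1) + 2 * 4 ^ (N + 1) * N) (advColor N),
        bapCost (fun _ => (0 : ℝ)) R = 2 * 4 ^ (N + 1) - 4 * 3 ^ N) ∧
    (∀ ρ : ℝ, ρ < 2 → ∀ K : ℕ, ∃ (n : ℕ) (c : ℕ → Color3),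
      K ≤ OPTcost n (fun _ => (0 : ℝ)) c ∧
      ∀ R : BaPRun n c,
        ρ * (OPTcost n (fun _ => (0 : ℝ)) c : ℝ) ≤ (bapCost (fun _ => (0 : ℝ)) R : ℝ)) := by
  have part1 : ∀ N : ℕ, 2 ≤ N →
      OPTcost (4 ^ (N + 1) + 2 * 4 ^ (N + 1) * N) (fun _ => (0 : ℝ)) (advColor N) =
        4 ^ (N + 1) ∧
      ∀ R : BaPRun (4 ^ (N + 1) + 2 * 4 ^ (N + 1) * N) (advColor N),
        bapCost (fun _ => (0 : ℝ)) R = 2 * 4 ^ (N + 1) - 4 * 3 ^ N := by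
    intro N _
    exact ⟨opt_eq N, fun R => by rw [bapCost_eq_nbins, nbins_final]⟩
  refine ⟨part1, ?_⟩
  intro ρ hρ K
  obtain ⟨n0, hn0⟩ := exists_pow_lt_of_lt_one (show (0:ℝ) < 2 - ρ by linarith)
    (show (3/4:ℝ) < 1 by norm_num)
  set N := max n0 (max 2 K) with hNdef
  have hN2 : 2 ≤ N := le_trans (le_max_left _ _) (le_max_right _ _)
  have hNK : K ≤ N := le_trans (le_max_right _ _) (le_max_right _ _)
  have hNn0 : n0 ≤ N := le_max_left _ _
  obtain ⟨hopt, hbap⟩ := part1 N hN2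
  refine ⟨4^(N+1) + 2*4^(N+1)*N, advColor N, ?_, ?_⟩
  · rw [hopt]
    have h1 : N < 4^N := Nat.lt_pow_self (by norm_num)
    have h2 : (4:ℕ)^N ≤ 4^(N+1) := Nat.pow_le_pow_right (by norm_num) (by omega)
    omega
  · intro R
    rw [hopt, hbap R]
    have h34 : ((3:ℝ)/4)^N ≤ (3/4:ℝ)^n0 :=
      pow_le_pow_of_le_one (by norm_num) (by norm_num) hNn0
    have hlt : ((3:ℝ)/4)^N < 2 - ρ := lt_of_le_of_lt h34 hn0
    have hsub : (4:ℕ)*3^N ≤ 2*4^(N+1) := by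
      have h1 : (3:ℕ)^N ≤ 4^N := Nat.pow_le_pow_left (by norm_num) N
      have h2 : (4:ℕ)^(N+1) = 4*4^N := by ring
      omega
    rw [Nat.cast_sub hsub]
    push_cast
    have hpow : ((3:ℝ)/4)^N * 4^(N+1) = 4*3^N := by
      rw [div_pow, pow_succ]
      have h4 : (4:ℝ)^N ≠ 0 := by positivity
      field_simp
    have hkey : (4:ℝ)*3^N < (2 - ρ) * 4^(N+1) := by
      have h1 : ((3:ℝ)/4)^N * 4^(N+1) < (2-ρ) * 4^(N+1) :=
        mul_lt_mul_of_pos_right hlt (by positivity)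
      linarith [hpow ▸ h1]
    have hexp : (2 - ρ) * (4:ℝ)^(N+1) = 2*4^(N+1) - ρ*4^(N+1) := by ring
    linarith
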